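/- For m > 0, y > 0, real s and integer k, the raising operator acts on the M-Whittaker seed by R_k(ℳ_{s,k}(4πmy) e(−mx)) = 4πm (s + k/2) ℳ_{s,k+2}(4πmy) e(−mx). -/

import Mathlib

noncomputable section

/-- Partial derivative in the direction of the real axis (`∂/∂u`). -/
def du (f : ℂ → ℂ) (z : ℂ) : ℂ := fderiv ℝ f z 1

/-- Partial derivative in the direction of the imaginary axis (`∂/∂v`). -/
def dv (f : ℂ → ℂ) (z : ℂ) : ℂ := fderiv ℝ f z Complex.I

/-- The weight `k` hyperbolic Laplace operator
`Δ_k = -v^2 (∂_u^2 + ∂_v^2) + i k v (∂_u + i ∂_v)`. -/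
def hypLaplacian (k : ℝ) (f : ℂ → ℂ) (z : ℂ) : ℂ :=
  -(z.im : ℂ) ^ 2 * (du (du f) z + dv (dv f) z)
    + Complex.I * (k : ℂ) * (z.im : ℂ) * (du f z + Complex.I * dv f z)

/-- The weight `k` Maass raising operator `R_k = 2i ∂/∂τ + k v⁻¹`,
where `2i ∂/∂τ = i ∂_u + ∂_v`. -/
def raiseOp (k : ℝ) (f : ℂ → ℂ) (z : ℂ) : ℂ :=
  Complex.I * du f z + dv f z + (k : ℂ) / (z.im : ℂ) * f z


/-- The classical M-Whittaker function `M_{ν,μ}(y)`, defined by its power series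
`M_{ν,μ}(y) = e^{-y/2} y^{μ+1/2} ∑_{n≥0} ((μ-ν+1/2)_n / ((2μ+1)_n n!)) yⁿ`. -/
def whittakerM (ν μ : ℝ) (y : ℝ) : ℝ :=
  Real.exp (-y / 2) * y ^ (μ + 1 / 2) *
    ∑' n : ℕ, (ascPochhammer ℝ n).eval (μ - ν + 1 / 2) /
      ((ascPochhammer ℝ n).eval (2 * μ + 1) * (n.factorial : ℝ)) * y ^ n

/-- `ℳ_{s,k}(y) = y^{-k/2} M_{-k/2, s-1/2}(y)`. -/
def mcal (s k : ℝ) (y : ℝ) : ℝ := y ^ (-(k / 2)) * whittakerM (-(k / 2)) (s - 1 / 2) y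

open Filter

/-- Series coefficients. -/
def wc (x d : ℝ) (n : ℕ) : ℝ :=
  (ascPochhammer ℝ n).eval x / ((ascPochhammer ℝ n).eval d * (n.factorial : ℝ))

lemma wc_succ (x d : ℝ) (n : ℕ) :
    wc x d (n + 1) = wc x d n * ((x + n) / ((d + n) * (n + 1))) := by
  unfold wc
  rw [ascPochhammer_succ_eval, ascPochhammer_succ_eval, Nat.factorial_succ]
  by_cases hQ : (ascPochhammer ℝ n).eval d = 0
  · simp [hQ]
  by_cases hd : (d : ℝ) + n = 0
  · simp [hd]
  have hfac : ((n.factorial : ℝ)) ≠ 0 := Nat.cast_ne_zero.mpr n.factorial_ne_zero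
  have hn1 : ((n : ℝ) + 1) ≠ 0 := by positivity
  push_cast
  field_simp

lemma wc_mul_eq (x d : ℝ) (n : ℕ) :
    x * wc (x + 1) d n = (x + n) * wc x d n := by
  unfold wc
  have h1 : x * (ascPochhammer ℝ n).eval (x + 1) = (x + n) * (ascPochhammer ℝ n).eval x := by
    have h2 := ascPochhammer_succ_eval (S := ℝ) n x
    have h3 : (ascPochhammer ℝ (n+1)).eval x = x * (ascPochhammer ℝ n).eval (x + 1) := by
      rw [ascPochhammer_succ_left, Polynomial.eval_mul, Polynomial.eval_comp]
      simp
    rw [← h3, h2]; ring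
  rw [mul_div_assoc', h1, mul_div_assoc']

lemma wc_ratio_eventually (x d R : ℝ) (hR : 0 ≤ R) :
    ∀ᶠ n : ℕ in atTop, ((n : ℝ) + 1) * |wc x d (n + 1)| * R ≤ (1/2) * ((n : ℝ) * |wc x d n|) := by
  obtain ⟨N, hN⟩ := exists_nat_ge (max (max |x| (2 * |d|)) (max (8 * R) 1))
  filter_upwards [eventually_ge_atTop N] with n hn
  have hn' : (N : ℝ) ≤ n := Nat.cast_le.mpr hn
  have hx : |x| ≤ n := le_trans (le_trans (le_max_left _ _) (le_max_left _ _)) (hN.trans hn')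
  have hd : 2 * |d| ≤ n := le_trans (le_trans (le_max_right _ _) (le_max_left _ _)) (hN.trans hn')
  have hRn : 8 * R ≤ n := le_trans (le_trans (le_max_left _ _) (le_max_right _ _)) (hN.trans hn')
  have h1 : (1:ℝ) ≤ n := le_trans (le_trans (le_max_right _ _) (le_max_right _ _)) (hN.trans hn')
  have hdn : (n : ℝ) / 2 ≤ |d + n| := by
    have h2 := le_abs_self (d + (n:ℝ))
    have h3 := neg_abs_le d
    linarith
  have hdn0 : (0:ℝ) < |d + n| := lt_of_lt_of_le (by linarith) hdn
  have hxn : |x + (n:ℝ)| ≤ 2 * n := by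
    calc |x + (n:ℝ)| ≤ |x| + |(n:ℝ)| := abs_add_le _ _
    _ ≤ 2 * n := by rw [Nat.abs_cast]; linarith
  have key : ((n : ℝ) + 1) * |wc x d (n + 1)| = |wc x d n| * (|x + n| / |d + n|) := by
    rw [wc_succ, abs_mul, abs_div, abs_mul]
    rw [abs_of_nonneg (by positivity : (0:ℝ) ≤ (n:ℝ) + 1)]
    field_simp
  rw [key]
  have hn0 : (n:ℝ) ≠ 0 := by linarith
  have hfrac : |x + (n:ℝ)| / |d + (n:ℝ)| ≤ 4 := by
    have h4 : (2*(n:ℝ))/((n:ℝ)/2) = 4 := by field_simp; ring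
    calc |x + (n:ℝ)| / |d + (n:ℝ)| ≤ (2*(n:ℝ))/((n:ℝ)/2) :=
          div_le_div₀ (by positivity) hxn (by positivity) hdn
    _ = 4 := h4
  calc |wc x d n| * (|x + (n:ℝ)| / |d + (n:ℝ)|) * R ≤ |wc x d n| * 4 * R := by
        gcongr
    _ ≤ |wc x d n| * 4 * ((n:ℝ)/8) := by gcongr; linarith
    _ = (1/2) * ((n : ℝ) * |wc x d n|) := by ring

/-- Summability of `n * |c n| * R^n`. -/
lemma summable_n_wc (x d R : ℝ) (hR : 0 ≤ R) :
    Summable (fun n : ℕ => (n : ℝ) * |wc x d n| * R ^ n) := by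
  apply summable_of_ratio_norm_eventually_le (r := 1/2) (by norm_num)
  filter_upwards [wc_ratio_eventually x d R hR] with n h
  have h1 : ‖((n:ℕ)+1 : ℝ) * |wc x d (n+1)| * R ^ (n+1)‖
      = (((n:ℝ)+1) * |wc x d (n+1)| * R) * R ^ n := by
    rw [Real.norm_eq_abs, abs_of_nonneg (by positivity), pow_succ]; ring
  have h2 : ‖((n:ℝ)) * |wc x d n| * R ^ n‖ = ((n:ℝ) * |wc x d n|) * R ^ n := by
    rw [Real.norm_eq_abs, abs_of_nonneg (by positivity)]
  push_cast
  push_cast at h1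
  rw [h1, h2]
  have : (0:ℝ) ≤ R ^ n := by positivity
  calc (((n:ℝ)+1) * |wc x d (n+1)| * R) * R ^ n
      ≤ ((1/2) * ((n:ℝ) * |wc x d n|)) * R ^ n := by gcongr
    _ = 1/2 * (((n:ℝ)) * |wc x d n| * R ^ n) := by ring

lemma summable_n_wc_pow (x d y : ℝ) :
    Summable (fun n : ℕ => (n : ℝ) * wc x d n * y ^ n) := by
  apply Summable.of_norm_bounded (summable_n_wc x d |y| (abs_nonneg _))
  intro n
  rw [Real.norm_eq_abs, abs_mul, abs_mul, abs_pow, Nat.abs_cast]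

lemma summable_wc_pow (x d y : ℝ) :
    Summable (fun n : ℕ => wc x d n * y ^ n) := by
  apply Summable.of_norm_bounded_eventually_nat
    (summable_n_wc x d |y| (abs_nonneg _))
  filter_upwards [eventually_ge_atTop 1] with n hn
  rw [Real.norm_eq_abs, abs_mul, abs_pow]
  have h1 : (1:ℝ) ≤ (n:ℝ) := by exact_mod_cast hn
  nlinarith [abs_nonneg (wc x d n), pow_nonneg (abs_nonneg y) n,
    mul_nonneg (abs_nonneg (wc x d n)) (pow_nonneg (abs_nonneg y) n)]

/-- Termwise differentiation of the power series. -/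
lemma wc_hasDerivAt (x d y : ℝ) :
    HasDerivAt (fun t : ℝ => ∑' n : ℕ, wc x d n * t ^ n)
      (∑' n : ℕ, wc x d n * ((n : ℝ) * y ^ (n - 1))) y := by
  set R : ℝ := |y| + 1 with hRdef
  have hR1 : (1:ℝ) ≤ R := by simp [hRdef]
  have hR0 : (0:ℝ) ≤ R := by linarith
  apply hasDerivAt_tsum_of_isPreconnected
    (g := fun (n : ℕ) (t : ℝ) => wc x d n * t ^ n)
    (g' := fun (n : ℕ) (t : ℝ) => wc x d n * ((n : ℝ) * t ^ (n - 1)))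
    (u := fun n : ℕ => (n : ℝ) * |wc x d n| * R ^ n)
    (summable_n_wc x d R hR0) (isOpen_Ioo (a := -R) (b := R))
    ((convex_Ioo _ _).isPreconnected) (y₀ := 0)
  · intro n t ht
    simpa using (hasDerivAt_pow n t).const_mul (wc x d n)
  · intro n t ht
    rw [Real.norm_eq_abs, abs_mul, abs_mul, abs_pow, Nat.abs_cast]
    have habs : |t| ≤ R := by
      rw [Set.mem_Ioo] at ht
      rw [abs_le]; constructor <;> linarith [ht.1, ht.2]
    have h1 : |t| ^ (n-1) ≤ R ^ n := by
      calc |t| ^ (n-1) ≤ R ^ (n-1) := pow_le_pow_left₀ (abs_nonneg t) habs _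
      _ ≤ R ^ n := pow_le_pow_right₀ hR1 (Nat.sub_le n 1)
    calc |wc x d n| * ((n:ℝ) * |t| ^ (n-1)) ≤ |wc x d n| * ((n:ℝ) * R ^ n) := by gcongr
    _ = (n:ℝ) * |wc x d n| * R ^ n := by ring
  · rw [Set.mem_Ioo]; constructor <;> [linarith; linarith]
  · exact summable_wc_pow x d 0
  · rw [Set.mem_Ioo]; constructor
    · linarith [neg_abs_le y]
    · linarith [le_abs_self y]

/-- The key contiguous-relation between the power series sums. -/
lemma wc_key_series (x d y : ℝ) :
    x * (∑' n : ℕ, wc (x + 1) d n * y ^ n)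
      = x * (∑' n : ℕ, wc x d n * y ^ n)
        + y * (∑' n : ℕ, wc x d n * ((n : ℝ) * y ^ (n - 1))) := by
  have e1 : y * (∑' n : ℕ, wc x d n * ((n : ℝ) * y ^ (n - 1)))
      = ∑' n : ℕ, (n : ℝ) * wc x d n * y ^ n := by
    rw [← tsum_mul_left]
    apply tsum_congr
    intro n
    cases n with
    | zero => simp
    | succ m => simp only [Nat.add_sub_cancel]; rw [pow_succ]; push_cast; ring
  rw [e1, ← tsum_mul_left, ← tsum_mul_left]
  rw [← Summable.tsum_add ((summable_wc_pow x d y).mul_left x) (summable_n_wc_pow x d y)]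
  apply tsum_congr
  intro n
  have := wc_mul_eq x d n
  calc x * (wc (x + 1) d n * y ^ n) = (x * wc (x + 1) d n) * y ^ n := by ring
    _ = ((x + n) * wc x d n) * y ^ n := by rw [this]
    _ = x * (wc x d n * y ^ n) + (n : ℝ) * wc x d n * y ^ n := by ring

def wF (x d : ℝ) (y : ℝ) : ℝ := ∑' n : ℕ, wc x d n * y ^ n

lemma mcal_eq (s k : ℝ) {y : ℝ} (hy : 0 < y) :
    mcal s k y = Real.exp (-y/2) * y ^ (s - k/2) * wF (s + k/2) (2*s) y := by
  unfold mcal whittakerM wF wc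
  have h1 : s - 1/2 + 1/2 = s := by ring
  have h2 : s - 1/2 - -(k/2) + 1/2 = s + k/2 := by ring
  have h3 : 2*(s - 1/2) + 1 = 2*s := by ring
  rw [h1, h2, h3, show s - k/2 = -(k/2) + s by ring, Real.rpow_add hy]
  ring

lemma mcal_hasDerivAt (s k : ℝ) {y : ℝ} (hy : 0 < y) :
    HasDerivAt (mcal s k)
      ((s + k/2) * mcal s (k+2) y - (1/2 + k/y) * mcal s k y) y := by
  set x := s + k/2 with hx
  set d := 2*s with hd
  set a := s - k/2 with ha
  have hE : HasDerivAt (fun t : ℝ => Real.exp (-t/2)) (Real.exp (-y/2) * (-1/2)) y :=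
    (((hasDerivAt_id y).neg.div_const 2)).exp
  have hP : HasDerivAt (fun t : ℝ => t ^ a) (a * y ^ (a - 1)) y :=
    Real.hasDerivAt_rpow_const (Or.inl hy.ne')
  have hF := wc_hasDerivAt x d y
  have hG := (hE.mul hP).mul hF
  have hev : mcal s k =ᶠ[nhds y]
      (fun t : ℝ => Real.exp (-t/2) * t ^ a * ∑' n : ℕ, wc x d n * t ^ n) := by
    apply Filter.eventuallyEq_of_mem (Ioi_mem_nhds hy)
    intro t ht
    exact mcal_eq s k (Set.mem_Ioi.mp ht)
  have hmain := hG.congr_of_eventuallyEq hev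
  refine hmain.congr_deriv (Eq.symm ?_)
  have hkey := wc_key_series x d y
  have hax : x = a + k := by rw [hx, ha]; ring
  rw [mcal_eq s k hy, mcal_eq s (k+2) hy]
  rw [show s + (k+2)/2 = x + 1 by rw [hx]; ring, show s - (k+2)/2 = a - 1 by rw [ha]; ring,
    ← hd, ← ha, ← hx]
  unfold wF
  rw [Real.rpow_sub_one hy.ne']
  set F0 : ℝ := ∑' n : ℕ, wc x d n * y ^ n
  set F1 : ℝ := ∑' n : ℕ, wc (x+1) d n * y ^ n
  set FD : ℝ := ∑' n : ℕ, wc x d n * ((n : ℝ) * y ^ (n - 1))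
  have hy' : y ≠ 0 := hy.ne'
  simp only [Pi.mul_apply, neg_div]
  field_simp
  linear_combination 2 * hkey


open Real in
/-- For `m > 0`, real `s` and integer `k`, the raising operator acts on the seed
`ℳ_{s,k}(4πmy) e(-mx)` by
`R_k(ℳ_{s,k}(4πmy) e(-mx)) = 4πm (s + k/2) ℳ_{s,k+2}(4πmy) e(-mx)`. -/
theorem raise_whittakerM_seed (m : ℝ) (hm : 0 < m) (s : ℝ) (k : ℤ)
    (τ : ℂ) (hτ : 0 < τ.im) :
    raiseOp (k : ℝ) (fun w : ℂ =>
        ((mcal s (k : ℝ) (4 * π * m * w.im) : ℝ) : ℂ) *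
          Complex.exp (-(2 * π * Complex.I * (m : ℂ) * (w.re : ℂ)))) τ
      = 4 * (π : ℂ) * (m : ℂ) * ((s : ℂ) + (k : ℂ) / 2) *
          (((mcal s ((k : ℝ) + 2) (4 * π * m * τ.im) : ℝ) : ℂ) *
            Complex.exp (-(2 * π * Complex.I * (m : ℂ) * (τ.re : ℂ)))) := by
  set v : ℝ := τ.im with hvdef
  have hv : 0 < v := hτ
  set y : ℝ := 4 * π * m * v with hydef
  have hy : 0 < y := by rw [hydef]; positivity
  set D : ℝ := (s + ((k:ℝ))/2) * mcal s (((k:ℝ))+2) y - (1/2 + ((k:ℝ))/y) * mcal s ((k:ℝ)) y with hDdef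
  -- real derivative of t ↦ mcal s k (4πm t) at v
  have hlin : HasDerivAt (fun t : ℝ => 4 * π * m * t) (4 * π * m) v := by
    simpa using (hasDerivAt_id v).const_mul (4 * π * m)
  have hG : HasDerivAt (fun t : ℝ => mcal s ((k:ℝ)) (4 * π * m * t)) (D * (4 * π * m)) v :=
    (mcal_hasDerivAt s ((k:ℝ)) hy).comp v hlin
  -- first factor as ℂ-valued function of w
  have hA0 : HasFDerivAt (fun w : ℂ => mcal s ((k:ℝ)) (4 * π * m * w.im))
      ((D * (4 * π * m)) • Complex.imCLM) τ :=
    (hG.comp_hasFDerivAt τ Complex.imCLM.hasFDerivAt :)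
  have hA : HasFDerivAt (fun w : ℂ => ((mcal s ((k:ℝ)) (4 * π * m * w.im) : ℝ) : ℂ))
      (Complex.ofRealCLM.comp ((D * (4 * π * m)) • Complex.imCLM)) τ :=
    (Complex.ofRealCLM.hasFDerivAt).comp τ hA0
  -- second factor
  set M : ℂ →L[ℝ] ℂ := -((2 * (π:ℂ) * Complex.I * m) • (Complex.ofRealCLM.comp Complex.reCLM))
    with hMdef
  have hMfun : (fun w : ℂ => -(2 * (π:ℂ) * Complex.I * (m:ℂ) * ((w.re : ℝ) : ℂ))) = ⇑M := by
    ext w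
    simp [hMdef]
  have hB0 : HasFDerivAt (fun w : ℂ => -(2 * (π:ℂ) * Complex.I * (m:ℂ) * ((w.re : ℝ) : ℂ))) M τ :=
    hMfun ▸ M.hasFDerivAt
  have hB : HasFDerivAt
      (fun w : ℂ => Complex.exp (-(2 * (π:ℂ) * Complex.I * (m:ℂ) * ((w.re : ℝ) : ℂ))))
      (Complex.exp (-(2 * (π:ℂ) * Complex.I * (m:ℂ) * ((τ.re : ℝ) : ℂ))) • M) τ := hB0.cexp
  -- product
  have hf := hA.mul hB
  set E : ℂ := Complex.exp (-(2 * (π:ℂ) * Complex.I * (m:ℂ) * ((τ.re : ℝ) : ℂ))) with hEdef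
  set L : ℂ →L[ℝ] ℂ :=
    ((mcal s ((k:ℝ)) (4 * π * m * τ.im) : ℝ) : ℂ) • (E • M)
      + E • (Complex.ofRealCLM.comp ((D * (4 * π * m)) • Complex.imCLM)) with hLdef
  have hf' : HasFDerivAt (fun w : ℂ =>
      ((mcal s ((k:ℝ)) (4 * π * m * w.im) : ℝ) : ℂ) *
        Complex.exp (-(2 * (π:ℂ) * Complex.I * (m:ℂ) * ((w.re : ℝ) : ℂ)))) L τ := hf
  have hdu : du (fun w : ℂ =>
      ((mcal s ((k:ℝ)) (4 * π * m * w.im) : ℝ) : ℂ) *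
        Complex.exp (-(2 * (π:ℂ) * Complex.I * (m:ℂ) * ((w.re : ℝ) : ℂ)))) τ = L 1 := by
    rw [du, hf'.fderiv]
  have hdv : dv (fun w : ℂ =>
      ((mcal s ((k:ℝ)) (4 * π * m * w.im) : ℝ) : ℂ) *
        Complex.exp (-(2 * (π:ℂ) * Complex.I * (m:ℂ) * ((w.re : ℝ) : ℂ)))) τ = L Complex.I := by
    rw [dv, hf'.fderiv]
  have hL1 : L 1 = ((mcal s ((k:ℝ)) y : ℝ) : ℂ) * E * (-(2 * (π:ℂ) * Complex.I * m)) := by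
    rw [hLdef]
    simp [hMdef, Complex.real_smul]
    ring
  have hLI : L Complex.I = E * ((D * (4 * π * m) : ℝ) : ℂ) := by
    rw [hLdef]
    simp [hMdef, Complex.real_smul]
  have hreal : 2*π*m * mcal s ((k:ℝ)) y + D * (4*π*m) + ((k:ℝ)/v) * mcal s ((k:ℝ)) y
      = 4*π*m*(s + (k:ℝ)/2) * mcal s ((k:ℝ)+2) y := by
    rw [hDdef, hydef]
    field_simp
    ring
  have hC := congrArg (fun r : ℝ => (r : ℂ) * E) hreal
  push_cast at hC
  have hI2 : (Complex.I)^2 = -1 := Complex.I_sq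
  rw [raiseOp]
  rw [hdu, hdv, hL1, hLI, ← hEdef]
  push_cast
  linear_combination hC + (-(2*(π:ℂ)*(m:ℂ)*((mcal s ((k:ℝ)) y : ℝ):ℂ)*E)) * hI2
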